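/- Let c : ℍ → ℂ be a continuous function. Suppose there exist E₁, E₂ ∈ SL(2,ℝ) such that E₁ is an elliptic matrix of infinite order with fixed point a ∈ ℍ, the point a is not a fixed point of E₂ (i.e. E₂·a ≠ a), and c(E₁·z) = c(z) and c(E₂·z) = c(z) for all z ∈ ℍ. Then c is constant on ℍ. -/

import Mathlib

open Matrix MatrixGroups UpperHalfPlane

open Complex Filter Topology Real


noncomputable section

def Complex.abs : AbsoluteValue ℂ ℝ where
  toFun := fun z => ‖z‖
  map_mul' := norm_mul
  nonneg' := norm_nonneg
  eq_zero' := fun _ => norm_eq_zero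
  add_le' := norm_add_le

lemma Complex.abs_conj (z : ℂ) : Complex.abs ((starRingEnd ℂ) z) = Complex.abs z :=
  Complex.norm_conj z

lemma Complex.abs_ofReal (r : ℝ) : Complex.abs (r : ℂ) = |r| := Complex.norm_real r

lemma Complex.sq_abs (z : ℂ) : Complex.abs z ^ 2 = normSq z := Complex.sq_norm z

lemma Complex.normSq_eq_abs (z : ℂ) : normSq z = Complex.abs z ^ 2 := Complex.normSq_eq_norm_sq z

lemma Complex.abs_exp_ofReal_mul_I (x : ℝ) : Complex.abs (Complex.exp (x * Complex.I)) = 1 :=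
  Complex.norm_exp_ofReal_mul_I x

lemma Complex.continuous_abs : Continuous Complex.abs := continuous_norm

lemma Complex.abs_mul_exp_arg_mul_I (x : ℂ) :
    ↑(Complex.abs x) * Complex.exp (x.arg * Complex.I) = x := Complex.norm_mul_exp_arg_mul_I x

namespace TwoCircles

/-- disk coordinate centered at `p` -/
def phi (p z : ℂ) : ℂ := (z - p) / (z - (starRingEnd ℂ) p)

/-- inverse map: point of `ℍ` with disk coordinate `v` around `p` -/
def psi (p v : ℂ) : ℂ := (p - v * (starRingEnd ℂ) p) / (1 - v)

lemma sub_conj_ne {p z : ℂ} (hp : 0 < p.im) (hz : 0 < z.im) : z - (starRingEnd ℂ) p ≠ 0 := by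
  intro h
  have : (z - (starRingEnd ℂ) p).im = 0 := by rw [h]; simp
  simp only [Complex.sub_im, Complex.conj_im] at this
  linarith

lemma p_sub_conj_ne {p : ℂ} (hp : 0 < p.im) : p - (starRingEnd ℂ) p ≠ 0 :=
  sub_conj_ne hp hp

lemma normSq_key (p z : ℂ) :
    normSq (z - (starRingEnd ℂ) p) = normSq (z - p) + 4 * z.im * p.im := by
  simp only [Complex.normSq_apply, Complex.sub_re, Complex.sub_im, Complex.conj_re,
    Complex.conj_im]
  ring

lemma abs_phi_lt_one {p z : ℂ} (hp : 0 < p.im) (hz : 0 < z.im) : Complex.abs (phi p z) < 1 := by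
  have hne := sub_conj_ne hp hz
  rw [phi, map_div₀, div_lt_one (by simpa using hne : (0:ℝ) < Complex.abs (z - (starRingEnd ℂ) p))]
  have h := normSq_key p z
  have h4 : 0 < 4 * z.im * p.im := by positivity
  have h1 : Complex.abs (z - p) ^ 2 < Complex.abs (z - (starRingEnd ℂ) p) ^ 2 := by
    rw [Complex.sq_abs, Complex.sq_abs]; linarith
  exact lt_of_pow_lt_pow_left₀ 2 (by positivity) h1

lemma one_sub_ne' {v : ℂ} (hv : Complex.abs v < 1) : 1 - v ≠ 0 := by
  intro h
  have : v = 1 := by linear_combination -h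
  rw [this] at hv; simp at hv

lemma psi_im (p : ℂ) (v : ℂ) :
    (psi p v).im = p.im * (1 - normSq v) / normSq (1 - v) := by
  rw [psi, Complex.div_im]
  simp only [Complex.sub_re, Complex.sub_im, Complex.mul_re, Complex.mul_im, Complex.one_re,
    Complex.one_im, Complex.conj_re, Complex.conj_im, Complex.normSq_apply]
  ring

lemma normSq_lt_one {v : ℂ} (hv : Complex.abs v < 1) : normSq v < 1 := by
  have := Complex.sq_abs v
  nlinarith [Complex.abs.nonneg v]

lemma psi_im_pos {p : ℂ} (hp : 0 < p.im) {v : ℂ} (hv : Complex.abs v < 1) : 0 < (psi p v).im := by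
  rw [psi_im p v]
  have h1 : normSq v < 1 := normSq_lt_one hv
  have h2 : 0 < normSq (1 - v) := normSq_pos.2 (one_sub_ne' hv)
  have h3 : (0:ℝ) < 1 - normSq v := by linarith
  positivity

lemma phi_psi {p : ℂ} (hp : 0 < p.im) {v : ℂ} (hv : Complex.abs v < 1) : phi p (psi p v) = v := by
  have h1 : (1:ℂ) - v ≠ 0 := one_sub_ne' hv
  have h2 : p - (starRingEnd ℂ) p ≠ 0 := p_sub_conj_ne hp
  rw [phi, psi]
  rw [div_sub' h1, div_sub' h1, div_div_div_cancel_right₀]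
  · rw [div_eq_iff (by intro h; apply h2; linear_combination h)]
    ring
  · exact h1

lemma phi_ne_one {p z : ℂ} (hp : 0 < p.im) (hz : 0 < z.im) : phi p z ≠ 1 := by
  rw [phi]
  intro h
  rw [div_eq_one_iff_eq (sub_conj_ne hp hz)] at h
  exact p_sub_conj_ne hp (by linear_combination -h)

lemma psi_phi {p z : ℂ} (hp : 0 < p.im) (hz : 0 < z.im) : psi p (phi p z) = z := by
  have h1 : (1:ℂ) - phi p z ≠ 0 := sub_ne_zero.2 fun h => phi_ne_one hp hz h.symm
  have h2 : z - (starRingEnd ℂ) p ≠ 0 := sub_conj_ne hp hz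
  have h3 := p_sub_conj_ne hp
  rw [phi] at h1
  rw [psi, phi]
  rw [div_eq_iff]
  · field_simp
    ring
  · exact h1

lemma phi_inj {p z w : ℂ} (hp : 0 < p.im) (hz : 0 < z.im) (hw : 0 < w.im)
    (h : phi p z = phi p w) : z = w := by
  have := psi_phi hp hz
  rw [h, psi_phi hp hw] at this
  exact this.symm

lemma phi_eq_zero {p z : ℂ} (hp : 0 < p.im) (hz : 0 < z.im) (h : phi p z = 0) : z = p := by
  rw [phi, div_eq_zero_iff] at h
  rcases h with h | h
  · linear_combination h
  · exact absurd h (sub_conj_ne hp hz)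

lemma coe_sl_smul (g : SL(2, ℝ)) (z : ℍ) :
    ((g • z : ℍ) : ℂ) = ((g 0 0 : ℝ) * z + (g 0 1 : ℝ)) / ((g 1 0 : ℝ) * z + (g 1 1 : ℝ)) := by
  rw [UpperHalfPlane.specialLinearGroup_apply]
  simp

lemma row_ne_zero (g : SL(2, ℝ)) : ![g 1 0, g 1 1] ≠ 0 := by
  intro h
  have h0 : g 1 0 = 0 := by have := congrFun h 0; simpa using this
  have h1 : g 1 1 = 0 := by have := congrFun h 1; simpa using this
  have hd := g.2
  rw [Matrix.det_fin_two] at hd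
  rw [h0, h1] at hd
  simp at hd

lemma denom_sl_ne_zero (g : SL(2, ℝ)) (z : ℍ) : ((g 1 0 : ℝ) : ℂ) * z + ((g 1 1 : ℝ) : ℂ) ≠ 0 := by
  have := UpperHalfPlane.linear_ne_zero (cd := ![g 1 0, g 1 1]) z (row_ne_zero g)
  simpa using this

lemma triv_sq (g : SL(2, ℝ)) (hg : ∀ z : ℍ, g • z = z) : g * g = 1 := by
  have hdet : g 0 0 * g 1 1 - g 0 1 * g 1 0 = 1 := by
    have := g.2; rwa [Matrix.det_fin_two] at this
  have hI : ((g • UpperHalfPlane.I : ℍ) : ℂ) = Complex.I := by rw [hg]; rfl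
  obtain ⟨z2, hz2⟩ : ∃ z2 : ℍ, (z2 : ℂ) = 2 * Complex.I :=
    ⟨UpperHalfPlane.mk (2 * Complex.I) (by simp), rfl⟩
  have hI2 : ((g • z2 : ℍ) : ℂ) = 2 * Complex.I := by rw [hg]; exact hz2
  rw [coe_sl_smul, UpperHalfPlane.coe_I] at hI
  rw [coe_sl_smul, hz2] at hI2
  have hd1 : ((g 1 0 : ℝ) : ℂ) * Complex.I + ((g 1 1 : ℝ) : ℂ) ≠ 0 := by
    have := denom_sl_ne_zero g UpperHalfPlane.I; rwa [UpperHalfPlane.coe_I] at this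
  have hd2 : ((g 1 0 : ℝ) : ℂ) * (2 * Complex.I) + ((g 1 1 : ℝ) : ℂ) ≠ 0 := by
    have := denom_sl_ne_zero g z2; rwa [hz2] at this
  rw [div_eq_iff hd1] at hI
  rw [div_eq_iff hd2] at hI2
  simp only [Complex.ext_iff, Complex.add_re, Complex.add_im, Complex.mul_re, Complex.mul_im,
    Complex.I_re, Complex.I_im, Complex.ofReal_re, Complex.ofReal_im, Complex.re_ofNat,
    Complex.im_ofNat] at hI hI2
  obtain ⟨r1, i1⟩ := hI
  obtain ⟨r2, i2⟩ := hI2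
  have hc : g 1 0 = 0 := by nlinarith [r1, r2]
  have hb : g 0 1 = 0 := by nlinarith
  have had : g 0 0 = g 1 1 := by nlinarith
  have ha2 : g 0 0 * g 0 0 = 1 := by
    linear_combination hdet + (g 0 0) * had + (g 1 0) * hb
  ext i j
  change ((g : Matrix (Fin 2) (Fin 2) ℝ) * g) i j = ((1 : SL(2,ℝ)) : Matrix (Fin 2) (Fin 2) ℝ) i j
  rw [Matrix.eta_fin_two (g : Matrix (Fin 2) (Fin 2) ℝ)]
  have h1 : ((1 : SL(2,ℝ)) : Matrix (Fin 2) (Fin 2) ℝ) = 1 := rfl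
  rw [h1, Matrix.one_fin_two]
  fin_cases i <;> fin_cases j <;>
    simp [Matrix.mul_apply, Fin.sum_univ_two, hc, hb, had, ha2] <;> nlinarith

lemma multiplier (E : SL(2, ℝ)) (a : ℍ) (hfix : E • a = a) :
    ∃ μ : ℂ, Complex.abs μ = 1 ∧ ∀ z : ℍ, phi (a : ℂ) ((E • z : ℍ) : ℂ) = μ * phi (a : ℂ) z := by
  set p : ℂ := (a : ℂ) with hpdef
  have hp : 0 < p.im := a.2
  have hdet : E 0 0 * E 1 1 - E 0 1 * E 1 0 = 1 := by
    have := E.2; rwa [Matrix.det_fin_two] at this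
  have hZ : ∀ z : ℍ, ((E • z : ℍ) : ℂ) * ((E 1 0 : ℝ) * z + (E 1 1 : ℝ))
      = (E 0 0 : ℝ) * z + (E 0 1 : ℝ) := fun z => by
    rw [coe_sl_smul, div_mul_cancel₀ _ (denom_sl_ne_zero E z)]
  have hap : ((E • a : ℍ) : ℂ) = p := congrArg _ hfix
  have heq : ((E 0 0 : ℝ) : ℂ) * p + ((E 0 1 : ℝ) : ℂ)
      = p * (((E 1 0 : ℝ) : ℂ) * p + ((E 1 1 : ℝ) : ℂ)) := by
    have h := hZ a; rw [hap] at h; linear_combination -h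
  have hqeq : ((E 0 0 : ℝ) : ℂ) * (starRingEnd ℂ) p + ((E 0 1 : ℝ) : ℂ)
      = (starRingEnd ℂ) p * (((E 1 0 : ℝ) : ℂ) * (starRingEnd ℂ) p + ((E 1 1 : ℝ) : ℂ)) := by
    have h := congrArg (starRingEnd ℂ) heq
    simpa only [map_add, _root_.map_mul, Complex.conj_ofReal] using h
  set u : ℂ := ((E 0 0 : ℝ) : ℂ) - p * ((E 1 0 : ℝ) : ℂ) with hudef
  have hu : u ≠ 0 := by
    intro h
    have h' : ((E 0 0 : ℝ) : ℂ) = p * ((E 1 0 : ℝ) : ℂ) := by linear_combination h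
    have him := congrArg Complex.im h'
    simp only [Complex.ofReal_im, Complex.mul_im, Complex.ofReal_re] at him
    have hc : E 1 0 = 0 := by
      rcases mul_eq_zero.1 (by linarith [him] : p.im * E 1 0 = 0) with h'' | h''
      · exact absurd h'' (ne_of_gt hp)
      · exact h''
    have hre := congrArg Complex.re h'
    simp only [Complex.ofReal_re, Complex.mul_re, Complex.ofReal_im, hc] at hre
    have ha0 : E 0 0 = 0 := by simpa [hc] using hre
    rw [ha0, hc] at hdet; simp at hdet
  have hcu : (starRingEnd ℂ) u ≠ 0 := by simpa using hu
  refine ⟨u / (starRingEnd ℂ) u, by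
    rw [map_div₀, Complex.abs_conj, div_self (by simpa using hu)], fun z => ?_⟩
  have hz : 0 < (z : ℂ).im := z.2
  have hdz : ((E 1 0 : ℝ) : ℂ) * z + ((E 1 1 : ℝ) : ℂ) ≠ 0 := denom_sl_ne_zero E z
  have hnum : ((E • z : ℍ) : ℂ) - p
      = u * ((z : ℂ) - p) / (((E 1 0 : ℝ) : ℂ) * z + ((E 1 1 : ℝ) : ℂ)) := by
    rw [eq_div_iff hdz]; linear_combination hZ z + heq
  have hden : ((E • z : ℍ) : ℂ) - (starRingEnd ℂ) p
      = (starRingEnd ℂ) u * ((z : ℂ) - (starRingEnd ℂ) p)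
        / (((E 1 0 : ℝ) : ℂ) * z + ((E 1 1 : ℝ) : ℂ)) := by
    rw [eq_div_iff hdz]
    have hcu2 : (starRingEnd ℂ) u = ((E 0 0 : ℝ) : ℂ) - (starRingEnd ℂ) p * ((E 1 0 : ℝ) : ℂ) := by
      rw [hudef]; simp only [map_sub, _root_.map_mul, Complex.conj_ofReal]
    rw [hcu2]; linear_combination hZ z + hqeq
  have hzq : (z : ℂ) - (starRingEnd ℂ) p ≠ 0 := sub_conj_ne hp hz
  rw [phi, phi, hnum, hden]
  field_simp
  exact mul_div_cancel_right₀ _ (by rwa [mul_comm] at hdz)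
lemma dense_powers {μ : ℂ} (hμ : Complex.abs μ = 1)
    (hroot : ∀ n : ℕ, 0 < n → μ ^ n ≠ 1) {t : ℂ} (ht : Complex.abs t = 1) :
    ∃ m : ℕ → ℤ, Tendsto (fun n => μ ^ m n) atTop (𝓝 t) := by
  have hexpμ : Complex.exp (μ.arg * Complex.I) = μ := by
    have := Complex.abs_mul_exp_arg_mul_I μ
    rwa [hμ, Complex.ofReal_one, one_mul] at this
  have hexpt : Complex.exp (t.arg * Complex.I) = t := by
    have := Complex.abs_mul_exp_arg_mul_I t
    rwa [ht, Complex.ofReal_one, one_mul] at this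
  set S : AddSubgroup ℝ := AddSubgroup.zmultiples μ.arg ⊔ AddSubgroup.zmultiples (2 * π) with hS
  -- every element of S exponentiates to a power of μ
  have hSexp : ∀ s ∈ S, ∃ m : ℤ, Complex.exp (s * Complex.I) = μ ^ m := by
    intro s hs
    rw [hS, AddSubgroup.mem_sup] at hs
    obtain ⟨y, hy, z, hz, hyz⟩ := hs
    obtain ⟨m, hm⟩ := AddSubgroup.mem_zmultiples_iff.1 hy
    obtain ⟨l, hl⟩ := AddSubgroup.mem_zmultiples_iff.1 hz
    refine ⟨m, ?_⟩
    have : (s : ℂ) = (m : ℂ) * μ.arg + (l : ℂ) * (2 * π) := by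
      rw [← hyz, ← hm, ← hl]; push_cast [zsmul_eq_mul]; ring
    rw [this, add_mul, Complex.exp_add, mul_assoc, Complex.exp_int_mul, hexpμ,
      mul_assoc, Complex.exp_int_mul]
    rw [Complex.exp_two_pi_mul_I, _root_.one_zpow, mul_one]
  rcases S.dense_or_cyclic with hd | ⟨g, hg⟩
  · -- dense case
    have hmem : t.arg ∈ closure (S : Set ℝ) := hd t.arg
    obtain ⟨s, hsS, hslim⟩ := mem_closure_iff_seq_limit.1 hmem
    choose m hm using fun n => hSexp (s n) (hsS n)
    refine ⟨m, ?_⟩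
    have hcont : Tendsto (fun n => Complex.exp (s n * Complex.I)) atTop
        (𝓝 (Complex.exp (t.arg * Complex.I))) := by
      apply (Complex.continuous_exp.tendsto _).comp
      exact (Complex.continuous_ofReal.tendsto _).comp hslim |>.mul_const _
    rw [hexpt] at hcont
    refine hcont.congr fun n => (hm n)
  · -- cyclic case: contradiction
    exfalso
    have hθ : μ.arg ∈ S := by
      apply AddSubgroup.mem_sup_left
      exact AddSubgroup.mem_zmultiples _
    have h2π : (2 * π : ℝ) ∈ S := by
      apply AddSubgroup.mem_sup_right
      exact AddSubgroup.mem_zmultiples _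
    rw [hg] at hθ h2π
    obtain ⟨k, hk⟩ := AddSubgroup.mem_closure_singleton.1 hθ
    obtain ⟨l, hl⟩ := AddSubgroup.mem_closure_singleton.1 h2π
    have hl0 : l ≠ 0 := by
      rintro rfl
      simp at hl
    set w := Complex.exp ((g : ℂ) * Complex.I) with hw
    have hwk : w ^ (k : ℤ) = μ := by
      rw [hw, ← Complex.exp_int_mul, show (k : ℂ) * ((g:ℂ) * Complex.I) = ((k • g : ℝ) : ℂ) * Complex.I by push_cast [zsmul_eq_mul]; ring, hk, hexpμ]
    have hwl : w ^ (l : ℤ) = 1 := by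
      rw [hw, ← Complex.exp_int_mul, show (l : ℂ) * ((g:ℂ) * Complex.I) = ((l • g : ℝ) : ℂ) * Complex.I by push_cast [zsmul_eq_mul]; ring, hl]
      push_cast
      exact Complex.exp_two_pi_mul_I
    have hμl : μ ^ (l : ℤ) = 1 := by
      rw [← hwk, ← _root_.zpow_mul, mul_comm, _root_.zpow_mul, hwl, _root_.one_zpow]
    have hn : μ ^ l.natAbs = 1 := by
      rcases Int.natAbs_eq l with h | h
      · rw [← zpow_natCast, ← h, hμl]
      · rw [← zpow_natCast, ← neg_neg (l.natAbs : ℤ), ← h, _root_.zpow_neg, hμl, inv_one]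
    exact hroot l.natAbs (Int.natAbs_pos.2 hl0) hn

/-- **Step A**: a continuous function invariant under an infinite-order elliptic element
fixing `a` is constant on the "circles" `|phi a z| = const`. -/
theorem const_on_circles (c : ℍ → ℂ) (hc : Continuous c) (E : SL(2, ℝ)) (a : ℍ)
    (hfix : E • a = a) (hinf : ∀ n : ℕ, 0 < n → E ^ n ≠ 1)
    (h1 : ∀ z : ℍ, c (E • z) = c z) :
    ∀ z w : ℍ, Complex.abs (phi (a : ℂ) z) = Complex.abs (phi (a : ℂ) w) → c z = c w := by
  obtain ⟨μ, hμ1, hμmul⟩ := multiplier E a hfix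
  have hμ0 : μ ≠ 0 := by intro h; rw [h] at hμ1; simp at hμ1
  have hp : 0 < (a : ℂ).im := a.2
  -- iterate the multiplier over ℤ
  have hnat : ∀ n : ℕ, ∀ z : ℍ, phi (a : ℂ) (((E ^ n) • z : ℍ) : ℂ) = μ ^ n * phi (a : ℂ) z := by
    intro n
    induction n with
    | zero => intro z; simp
    | succ n ih =>
      intro z
      rw [pow_succ', mul_smul, hμmul, ih, pow_succ']
      ring
  have hzpow : ∀ m : ℤ, ∀ z : ℍ, phi (a : ℂ) (((E ^ m) • z : ℍ) : ℂ) = μ ^ m * phi (a : ℂ) z := by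
    intro m
    induction m using Int.rec with
    | ofNat n => intro z; simpa using hnat n z
    | negSucc n =>
      intro z
      have h := hnat (n+1) ((E ^ (n+1))⁻¹ • z)
      rw [smul_inv_smul] at h
      have he : ((E ^ (n+1))⁻¹ • z : ℍ) = ((E ^ Int.negSucc n) • z : ℍ) := by rw [zpow_negSucc]
      rw [← he, h, zpow_negSucc]
      field_simp
  -- μ is not a root of unity
  have hroot : ∀ n : ℕ, 0 < n → μ ^ n ≠ 1 := by
    intro n hn h
    have htriv : ∀ z : ℍ, (E ^ n) • z = z := by
      intro z
      have h2 := hnat n z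
      rw [h, one_mul] at h2
      have := phi_inj hp ((E ^ n) • z).2 z.2 h2
      exact UpperHalfPlane.ext this
    have := triv_sq (E ^ n) htriv
    rw [← pow_add] at this
    exact hinf (n + n) (by omega) this
  -- c is invariant under all ℤ-powers of E
  have hcinv : ∀ m : ℤ, ∀ z : ℍ, c ((E ^ m) • z) = c z := by
    have hcn : ∀ n : ℕ, ∀ z : ℍ, c ((E ^ n) • z) = c z := by
      intro n
      induction n with
      | zero => intro z; simp
      | succ n ih => intro z; rw [pow_succ', mul_smul, h1, ih]
    intro m
    induction m using Int.rec with
    | ofNat n => intro z; simpa using hcn n z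
    | negSucc n =>
      intro z
      have h := hcn (n+1) ((E ^ (n+1))⁻¹ • z)
      rw [smul_inv_smul] at h
      have he : ((E ^ (n+1))⁻¹ • z : ℍ) = ((E ^ Int.negSucc n) • z : ℍ) := by rw [zpow_negSucc]
      rw [← he, h]
  -- main argument
  intro z w habs
  by_cases h0 : phi (a : ℂ) z = 0
  · have hz : (z : ℂ) = a := phi_eq_zero hp z.2 h0
    have hw : (w : ℂ) = a := by
      rw [h0] at habs
      simp only [map_zero] at habs
      exact phi_eq_zero hp w.2 (by
        have := Complex.abs.eq_zero.1 habs.symm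
        exact this)
    have : z = w := UpperHalfPlane.ext (by rw [hz, hw])
    rw [this]
  · -- target point on the unit circle
    set t : ℂ := phi (a : ℂ) w / phi (a : ℂ) z with htdef
    have ht : Complex.abs t = 1 := by
      rw [htdef, map_div₀, ← habs, div_self]
      simpa using h0
    obtain ⟨m, hm⟩ := dense_powers hμ1 hroot ht
    -- the points E^(m n) • z converge to w
    have hφlim : Tendsto (fun n => phi (a : ℂ) (((E ^ m n) • z : ℍ) : ℂ)) atTop
        (𝓝 (phi (a : ℂ) w)) := by
      have : Tendsto (fun n => μ ^ m n * phi (a : ℂ) z) atTop (𝓝 (t * phi (a : ℂ) z)) :=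
        hm.mul_const _
      rw [htdef, div_mul_cancel₀ _ h0] at this
      exact this.congr fun n => (hzpow (m n) z).symm
    have hwlt : Complex.abs (phi (a : ℂ) w) < 1 := abs_phi_lt_one hp w.2
    have hclim : Tendsto (fun n => (((E ^ m n) • z : ℍ) : ℂ)) atTop (𝓝 (w : ℂ)) := by
      have hψcont : Tendsto (fun n => psi (a : ℂ) (phi (a : ℂ) (((E ^ m n) • z : ℍ) : ℂ)))
          atTop (𝓝 (psi (a : ℂ) (phi (a : ℂ) w))) := by
        rw [psi]
        apply Tendsto.div
        · exact tendsto_const_nhds.sub (hφlim.mul_const _)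
        · exact tendsto_const_nhds.sub hφlim
        · exact one_sub_ne' hwlt
      have hcoe : psi (a : ℂ) (phi (a : ℂ) w) = (w : ℂ) := psi_phi hp w.2
      rw [hcoe] at hψcont
      refine hψcont.congr fun n => ?_
      exact psi_phi hp ((E ^ m n) • z).2
    have hHlim : Tendsto (fun n => ((E ^ m n) • z : ℍ)) atTop (𝓝 w) := by
      rw [UpperHalfPlane.isEmbedding_coe.isInducing.tendsto_nhds_iff]
      exact hclim
    have h1' : Tendsto (fun n => c ((E ^ m n) • z)) atTop (𝓝 (c w)) :=
      ((hc.tendsto w).comp hHlim)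
    have h2' : Tendsto (fun n => c ((E ^ m n) • z)) atTop (𝓝 (c z)) := by
      refine tendsto_const_nhds.congr fun n => ?_
      rw [hcinv (m n) z]
    exact tendsto_nhds_unique h2' h1'
/-- the point of `ℍ` with disk coordinate `v` around `a` (junk value `a` if `|v| ≥ 1`) -/
def pt (a : ℍ) (v : ℂ) : ℍ :=
  if h : Complex.abs v < 1 then ⟨psi (a : ℂ) v, psi_im_pos a.2 h⟩ else a

lemma pt_coe (a : ℍ) {v : ℂ} (h : Complex.abs v < 1) : ((pt a v : ℍ) : ℂ) = psi (a : ℂ) v := by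
  rw [pt, dif_pos h]

lemma phi_pt (a : ℍ) {v : ℂ} (h : Complex.abs v < 1) : phi (a : ℂ) ((pt a v : ℍ) : ℂ) = v := by
  rw [pt_coe a h]; exact phi_psi a.2 h

lemma abs_B_lt_abs_A (a b : ℍ) :
    Complex.abs ((b : ℂ) - (a : ℂ)) < Complex.abs ((a : ℂ) - (starRingEnd ℂ) (b : ℂ)) := by
  have h := normSq_key (b : ℂ) (a : ℂ)
  have h4 : 0 < 4 * (a : ℂ).im * (b : ℂ).im := by
    have := a.2; have := b.2; positivity
  have hkey : normSq ((b:ℂ) - (a:ℂ)) < normSq ((a:ℂ) - (starRingEnd ℂ) (b:ℂ)) := by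
    have hcomm : normSq ((b:ℂ) - (a:ℂ)) = normSq ((a:ℂ) - (b:ℂ)) := by
      rw [show (b:ℂ) - (a:ℂ) = -((a:ℂ) - (b:ℂ)) by ring, normSq_neg]
    rw [hcomm]; linarith
  have h1 : Complex.abs ((b:ℂ) - (a:ℂ)) ^ 2 < Complex.abs ((a:ℂ) - (starRingEnd ℂ) (b:ℂ)) ^ 2 := by
    rw [Complex.sq_abs, Complex.sq_abs]; exact hkey
  exact lt_of_pow_lt_pow_left₀ 2 (by positivity) h1

lemma denomAB_ne (a b : ℍ) {u : ℂ} (hu : Complex.abs u ≤ 1) :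
    (starRingEnd ℂ) ((b : ℂ) - (a : ℂ)) * u + (starRingEnd ℂ) ((a : ℂ) - (starRingEnd ℂ) (b : ℂ))
      ≠ 0 := by
  intro h
  have h' : (starRingEnd ℂ) ((a : ℂ) - (starRingEnd ℂ) (b : ℂ))
      = -((starRingEnd ℂ) ((b : ℂ) - (a : ℂ)) * u) := by linear_combination h
  have habs := congrArg Complex.abs h'
  rw [Complex.abs_conj, map_neg_eq_map, _root_.map_mul, Complex.abs_conj] at habs
  have hlt := abs_B_lt_abs_A a b
  nlinarith [Complex.abs.nonneg ((b:ℂ) - (a:ℂ)), Complex.abs.nonneg u]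

/-- formula for `phi a ∘ psi b` as a Möbius transformation of the disk -/
lemma abs_phi_psi (a b : ℍ) {u : ℂ} (hu : Complex.abs u < 1) :
    Complex.abs (phi (a : ℂ) (psi (b : ℂ) u)) =
      Complex.abs (((a : ℂ) - (starRingEnd ℂ) (b : ℂ)) * u + ((b : ℂ) - (a : ℂ)))
        / Complex.abs ((starRingEnd ℂ) ((b : ℂ) - (a : ℂ)) * u
            + (starRingEnd ℂ) ((a : ℂ) - (starRingEnd ℂ) (b : ℂ))) := by
  have h1u : (1:ℂ) - u ≠ 0 := one_sub_ne' hu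
  have hden := denomAB_ne a b (le_of_lt hu)
  have hnum : psi (b : ℂ) u - (a : ℂ)
      = (((a : ℂ) - (starRingEnd ℂ) (b : ℂ)) * u + ((b : ℂ) - (a : ℂ))) / (1 - u) := by
    rw [psi, eq_div_iff h1u, sub_mul, div_mul_cancel₀ _ h1u]
    ring
  have hden2 : psi (b : ℂ) u - (starRingEnd ℂ) (a : ℂ)
      = -((starRingEnd ℂ) ((b : ℂ) - (a : ℂ)) * u
          + (starRingEnd ℂ) ((a : ℂ) - (starRingEnd ℂ) (b : ℂ))) / (1 - u) := by
    rw [psi, eq_div_iff h1u, sub_mul, div_mul_cancel₀ _ h1u]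
    simp only [map_sub, Complex.conj_conj]
    ring
  rw [phi, hnum, hden2, div_div_div_cancel_right₀ h1u, map_div₀, map_neg_eq_map]
lemma abs_formula (A B : ℂ) (hA0 : A ≠ 0) (hB0 : B ≠ 0) (t : ℝ) :
    Complex.abs (A * ((t : ℂ) * (-B * (starRingEnd ℂ) A
        / ((Complex.abs A : ℝ) * (Complex.abs B : ℝ) : ℝ))) + B)
      = |Complex.abs B - t * Complex.abs A| ∧
    Complex.abs ((starRingEnd ℂ) B * ((t : ℂ) * (-B * (starRingEnd ℂ) A
        / ((Complex.abs A : ℝ) * (Complex.abs B : ℝ) : ℝ))) + (starRingEnd ℂ) A)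
      = |Complex.abs A - t * Complex.abs B| := by
  have hkA : 0 < Complex.abs A := by simpa using hA0
  have hkB : 0 < Complex.abs B := by simpa using hB0
  have hA2 : A * (starRingEnd ℂ) A = ((Complex.abs A : ℝ) : ℂ) * ((Complex.abs A : ℝ) : ℂ) := by
    rw [Complex.mul_conj, Complex.normSq_eq_abs]; push_cast; ring
  have hB2 : B * (starRingEnd ℂ) B = ((Complex.abs B : ℝ) : ℂ) * ((Complex.abs B : ℝ) : ℂ) := by
    rw [Complex.mul_conj, Complex.normSq_eq_abs]; push_cast; ring
  have hkAC : ((Complex.abs A : ℝ) : ℂ) ≠ 0 := by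
    simpa using ne_of_gt hkA
  have hkBC : ((Complex.abs B : ℝ) : ℂ) ≠ 0 := by
    simpa using ne_of_gt hkB
  constructor
  · have h1 : A * ((t : ℂ) * (-B * (starRingEnd ℂ) A
        / ((Complex.abs A : ℝ) * (Complex.abs B : ℝ) : ℝ))) + B
        = B * (((Complex.abs B - t * Complex.abs A) / Complex.abs B : ℝ) : ℂ) := by
      push_cast
      field_simp
      linear_combination (-(t : ℂ)) * hA2
    rw [h1, _root_.map_mul, Complex.abs_ofReal, abs_div, abs_of_pos hkB]
    field_simp
  · have h1 : (starRingEnd ℂ) B * ((t : ℂ) * (-B * (starRingEnd ℂ) A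
        / ((Complex.abs A : ℝ) * (Complex.abs B : ℝ) : ℝ))) + (starRingEnd ℂ) A
        = (starRingEnd ℂ) A * (((Complex.abs A - t * Complex.abs B) / Complex.abs A : ℝ) : ℂ) := by
      push_cast
      field_simp
      linear_combination (-((starRingEnd ℂ) A * (t : ℂ))) * hB2
    rw [h1, _root_.map_mul, Complex.abs_ofReal, Complex.abs_conj, abs_div, abs_of_pos hkA]
    field_simp

end TwoCircles

end

open TwoCircles

set_option maxHeartbeats 1000000 in
/-- **Two circles lemma.** If a continuous function on the upper half-plane is invariant
under an elliptic matrix `E₁` of infinite order with fixed point `a`, and under a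
matrix `E₂` not fixing `a`, then it is constant. -/
theorem two_circles_lemma (c : ℍ → ℂ) (hc : Continuous c)
    (E₁ E₂ : SL(2, ℝ)) (a : ℍ)
    (hfix : E₁ • a = a)
    (huniq : ∀ z : ℍ, E₁ • z = z → z = a)
    (hinf : ∀ n : ℕ, 0 < n → E₁ ^ n ≠ 1)
    (hE₂ : E₂ • a ≠ a)
    (h1 : ∀ z : ℍ, c (E₁ • z) = c z)
    (h2 : ∀ z : ℍ, c (E₂ • z) = c z) :
    ∀ z w : ℍ, c z = c w := by
  -- the second center b = E₂⁻¹ • a and its elliptic stabilizer E'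
  set b : ℍ := E₂⁻¹ • a with hbdef
  have hba : (b : ℂ) ≠ (a : ℂ) := by
    intro h
    have hb : b = a := UpperHalfPlane.ext h
    apply hE₂
    calc E₂ • a = E₂ • (E₂⁻¹ • a) := by rw [← hbdef, hb]
    _ = a := smul_inv_smul _ _
  set E' : SL(2, ℝ) := E₂⁻¹ * E₁ * E₂ with hE'def
  have hfix' : E' • b = b := by
    rw [hbdef, hE'def, mul_smul, mul_smul, smul_inv_smul, hfix]
  have hconj : ∀ n : ℕ, E' ^ n = E₂⁻¹ * E₁ ^ n * E₂ := by
    intro n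
    induction n with
    | zero => simp
    | succ n ih =>
      rw [pow_succ, ih, hE'def, pow_succ]
      group
  have hinf' : ∀ n : ℕ, 0 < n → E' ^ n ≠ 1 := by
    intro n hn h
    apply hinf n hn
    rw [hconj] at h
    calc E₁ ^ n = E₂ * (E₂⁻¹ * E₁ ^ n * E₂) * E₂⁻¹ := by group
    _ = E₂ * 1 * E₂⁻¹ := by rw [h]
    _ = 1 := by group
  have h2inv : ∀ z : ℍ, c (E₂⁻¹ • z) = c z := by
    intro z
    have h := h2 (E₂⁻¹ • z)
    rw [smul_inv_smul] at h
    exact h.symm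
  have h1' : ∀ z : ℍ, c (E' • z) = c z := by
    intro z
    rw [hE'def, mul_smul, mul_smul, h2inv, h1, h2]
  have CA := const_on_circles c hc E₁ a hfix hinf h1
  have CB := const_on_circles c hc E' b hfix' hinf' h1'
  -- geometric constants
  obtain ⟨kA, hkA⟩ : ∃ x, Complex.abs ((a : ℂ) - (starRingEnd ℂ) (b : ℂ)) = x := ⟨_, rfl⟩
  obtain ⟨kB, hkB⟩ : ∃ x, Complex.abs ((b : ℂ) - (a : ℂ)) = x := ⟨_, rfl⟩
  have hB0 : (b : ℂ) - (a : ℂ) ≠ 0 := sub_ne_zero.2 hba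
  have hkB0 : 0 < kB := by rw [← hkB]; simpa using hB0
  have hkABlt : kB < kA := by rw [← hkA, ← hkB]; exact abs_B_lt_abs_A a b
  have hkA0 : 0 < kA := lt_trans hkB0 hkABlt
  have hA0 : (a : ℂ) - (starRingEnd ℂ) (b : ℂ) ≠ 0 := by
    intro h
    rw [h, map_zero] at hkA
    linarith
  set sh : ℂ := -((b : ℂ) - (a : ℂ)) * (starRingEnd ℂ) ((a : ℂ) - (starRingEnd ℂ) (b : ℂ))
      / ((kA * kB : ℝ) : ℂ) with hshdef
  have habs_sh : Complex.abs sh = 1 := by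
    rw [hshdef, map_div₀, _root_.map_mul, map_neg_eq_map, Complex.abs_conj, Complex.abs_ofReal,
      hkA, hkB, abs_of_pos (mul_pos hkA0 hkB0)]
    field_simp [ne_of_gt hkA0, ne_of_gt hkB0]
  -- the key step: c is constant on a band of circles around a determined by t
  have key : ∀ t : ℝ, 0 < t → t < 1 → ∀ r : ℝ,
      |kB - t * kA| / (kA - t * kB) ≤ r → r ≤ (kB + t * kA) / (kA + t * kB) →
      c (pt a ((r : ℝ) : ℂ)) = c (pt b ((t : ℂ) * sh)) := by
    intro t ht0 ht1 r hr1 hr2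
    have hdenpos : 0 < kA - t * kB := by nlinarith
    have hdenpos2 : 0 < kA + t * kB := by nlinarith
    have hr0 : 0 ≤ r := le_trans (by positivity) hr1
    have hr_lt1 : r < 1 := lt_of_le_of_lt hr2 (by rw [div_lt_one hdenpos2]; nlinarith)
    have habs_u : ∀ θ : ℝ,
        Complex.abs ((t : ℂ) * Complex.exp ((θ : ℝ) * Complex.I) * sh) = t := by
      intro θ
      rw [_root_.map_mul, _root_.map_mul, Complex.abs_ofReal, Complex.abs_exp_ofReal_mul_I,
        habs_sh, abs_of_pos ht0, mul_one, mul_one]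
    have hu1 : ∀ θ : ℝ, Complex.abs ((t : ℂ) * Complex.exp ((θ : ℝ) * Complex.I) * sh) < 1 :=
      fun θ => by rw [habs_u θ]; exact ht1
    set F : ℝ → ℝ := fun θ =>
      Complex.abs (((a : ℂ) - (starRingEnd ℂ) (b : ℂ))
            * ((t : ℂ) * Complex.exp ((θ : ℝ) * Complex.I) * sh) + ((b : ℂ) - (a : ℂ)))
        / Complex.abs ((starRingEnd ℂ) ((b : ℂ) - (a : ℂ))
            * ((t : ℂ) * Complex.exp ((θ : ℝ) * Complex.I) * sh)
            + (starRingEnd ℂ) ((a : ℂ) - (starRingEnd ℂ) (b : ℂ))) with hFdef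
    have hFcont : Continuous F := by
      rw [hFdef]
      apply Continuous.div
      · apply Complex.continuous_abs.comp
        fun_prop
      · apply Complex.continuous_abs.comp
        fun_prop
      · intro θ
        exact Complex.abs.ne_zero (denomAB_ne a b (le_of_lt (hu1 θ)))
    have hF0 : F 0 = |kB - t * kA| / (kA - t * kB) := by
      have h := abs_formula ((a : ℂ) - (starRingEnd ℂ) (b : ℂ)) ((b : ℂ) - (a : ℂ)) hA0 hB0 t
      rw [hkA, hkB] at h
      rw [hFdef]
      simp only [Complex.ofReal_zero, zero_mul, Complex.exp_zero, mul_one]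
      rw [h.1, h.2, abs_of_pos hdenpos]
    have hFpi : F π = (kB + t * kA) / (kA + t * kB) := by
      have h := abs_formula ((a : ℂ) - (starRingEnd ℂ) (b : ℂ)) ((b : ℂ) - (a : ℂ)) hA0 hB0 (-t)
      rw [hkA, hkB] at h
      rw [hFdef]
      simp only [Complex.exp_pi_mul_I]
      have hcast : (t : ℂ) * (-1) * sh = ((-t : ℝ) : ℂ) * sh := by push_cast; ring
      rw [hcast, h.1, h.2]
      have e1 : kB - -t * kA = kB + t * kA := by ring
      have e2 : kA - -t * kB = kA + t * kB := by ring
      rw [e1, e2, abs_of_pos (by nlinarith), abs_of_pos (by nlinarith)]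
    have hmem : r ∈ Set.Icc (F 0) (F π) := by rw [hF0, hFpi]; exact ⟨hr1, hr2⟩
    obtain ⟨θ, hθI, hFθ⟩ :=
      intermediate_value_Icc (le_of_lt Real.pi_pos) hFcont.continuousOn hmem
    have hvr : Complex.abs ((r : ℝ) : ℂ) < 1 := by
      rw [Complex.abs_ofReal, _root_.abs_of_nonneg hr0]; exact hr_lt1
    have hts : Complex.abs ((t : ℂ) * sh) < 1 := by
      rw [_root_.map_mul, Complex.abs_ofReal, habs_sh, abs_of_pos ht0, mul_one]; exact ht1
    have hw1a : Complex.abs (phi (a : ℂ)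
        ((pt b ((t : ℂ) * Complex.exp ((θ : ℝ) * Complex.I) * sh) : ℍ) : ℂ)) = r := by
      rw [pt_coe b (hu1 θ), abs_phi_psi a b (hu1 θ)]
      exact hFθ
    have e1 : c (pt a ((r : ℝ) : ℂ)) = c (pt b ((t : ℂ) * Complex.exp ((θ : ℝ) * Complex.I) * sh)) := by
      apply CA
      rw [phi_pt a hvr, hw1a, Complex.abs_ofReal, _root_.abs_of_nonneg hr0]
    have e2 : c (pt b ((t : ℂ) * Complex.exp ((θ : ℝ) * Complex.I) * sh))
        = c (pt b ((t : ℂ) * sh)) := by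
      apply CB
      rw [phi_pt b (hu1 θ), phi_pt b hts, habs_u θ, _root_.map_mul, Complex.abs_ofReal,
        habs_sh, abs_of_pos ht0, mul_one]
    exact e1.trans e2
  -- the expansion map G r = (r + K) / (1 + K * r)
  obtain ⟨K, hKdef⟩ : ∃ x, 2 * kA * kB / (kA ^ 2 + kB ^ 2) = x := ⟨_, rfl⟩
  have hsq : 0 < kA ^ 2 + kB ^ 2 := by positivity
  have hK0 : 0 < K := by rw [← hKdef]; positivity
  have hK1 : K < 1 := by
    rw [← hKdef, div_lt_one hsq]; nlinarith
  have hKm : ∀ m : ℝ, 0 ≤ m → m < 1 → 0 < 1 + K * m := by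
    intro m hm0 hm1; nlinarith
  -- single expansion step
  have stepG : ∀ r : ℝ, 0 ≤ r → r < 1 → ∀ r' : ℝ, r ≤ r' → r' ≤ (r + K) / (1 + K * r) →
      c (pt a ((r' : ℝ) : ℂ)) = c (pt a ((r : ℝ) : ℂ)) := by
    intro r hr0 hr1 r' hr'1 hr'2
    obtain ⟨t, htdef⟩ : ∃ x, (r * kA + kB) / (kA + r * kB) = x := ⟨_, rfl⟩
    have hdpos : 0 < kA + r * kB := by nlinarith
    have ht0 : 0 < t := by rw [← htdef]; positivity
    have ht1 : t < 1 := by rw [← htdef, div_lt_one hdpos]; nlinarith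
    have hlow : |kB - t * kA| / (kA - t * kB) = r := by
      have h1 : kB - t * kA = -(r * (kA ^ 2 - kB ^ 2) / (kA + r * kB)) := by
        rw [← htdef]; field_simp; ring
      have h2 : kA - t * kB = (kA ^ 2 - kB ^ 2) / (kA + r * kB) := by
        rw [← htdef]; field_simp; ring
      have hX : 0 < kA ^ 2 - kB ^ 2 := by nlinarith
      rw [h1, h2, abs_neg,
        _root_.abs_of_nonneg (div_nonneg (mul_nonneg hr0 (le_of_lt hX)) (le_of_lt hdpos)),
        div_div_div_cancel_right₀ (ne_of_gt hdpos), mul_div_assoc,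
        div_self (ne_of_gt hX), mul_one]
    have hhigh : (kB + t * kA) / (kA + t * kB) = (r + K) / (1 + K * r) := by
      rw [← htdef, ← hKdef]
      have d1 : 0 < kA + (r * kA + kB) / (kA + r * kB) * kB := by positivity
      have d2 : 0 < 1 + 2 * kA * kB / (kA ^ 2 + kB ^ 2) * r := by positivity
      rw [div_eq_div_iff (ne_of_gt d1) (ne_of_gt d2)]
      field_simp
      ring
    have hself : r ≤ (r + K) / (1 + K * r) := by
      rw [le_div_iff₀ (hKm r hr0 hr1)]
      nlinarith [mul_nonneg (mul_nonneg (le_of_lt hK0) (sub_nonneg.2 (le_of_lt hr1)))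
        (by linarith : (0:ℝ) ≤ 1 + r)]
    have e1 := key t ht0 ht1 r (le_of_eq hlow) (by rw [hhigh]; exact hself)
    have e2 := key t ht0 ht1 r' (by rw [hlow]; exact hr'1) (by rw [hhigh]; exact hr'2)
    exact e2.trans e1.symm
  -- iteration: c(pt a r) = c(pt a 0) for all r ∈ [0,1)
  have const01 : ∀ X : ℝ, 0 ≤ X → X < 1 → c (pt a ((X : ℝ) : ℂ)) = c (pt a ((0 : ℝ) : ℂ)) := by
    intro X hX0 hX1
    obtain ⟨SS, hSSdef⟩ : ∃ s : Set ℝ, s = {x : ℝ | x ∈ Set.Icc 0 X ∧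
        ∀ y : ℝ, 0 ≤ y → y ≤ x → c (pt a ((y : ℝ) : ℂ)) = c (pt a ((0 : ℝ) : ℂ))} := ⟨_, rfl⟩
    have h0SS : (0 : ℝ) ∈ SS := by
      rw [hSSdef]
      refine ⟨⟨le_refl 0, hX0⟩, fun y hy0 hy1 => ?_⟩
      have : y = 0 := le_antisymm hy1 hy0
      rw [this]
    have hbdd : BddAbove SS := by
      refine ⟨X, fun x hx => ?_⟩
      rw [hSSdef] at hx
      exact hx.1.2
    obtain ⟨m, hmdef⟩ : ∃ x, sSup SS = x := ⟨_, rfl⟩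
    have hm0 : 0 ≤ m := by rw [← hmdef]; exact le_csSup hbdd h0SS
    have hmX : m ≤ X := by
      rw [← hmdef]
      apply csSup_le ⟨0, h0SS⟩
      intro x hx
      rw [hSSdef] at hx
      exact hx.1.2
    have hm1 : m < 1 := lt_of_le_of_lt hmX hX1
    have hPlt : ∀ y : ℝ, 0 ≤ y → y < m → c (pt a ((y : ℝ) : ℂ)) = c (pt a ((0 : ℝ) : ℂ)) := by
      intro y hy0 hym
      rw [← hmdef] at hym
      obtain ⟨x, hxSS, hyx⟩ := exists_lt_of_lt_csSup ⟨0, h0SS⟩ hym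
      rw [hSSdef] at hxSS
      exact hxSS.2 y hy0 (le_of_lt hyx)
    have hPm : ∀ y : ℝ, 0 ≤ y → y ≤ m → c (pt a ((y : ℝ) : ℂ)) = c (pt a ((0 : ℝ) : ℂ)) := by
      intro y hy0 hym
      rcases lt_or_eq_of_le hym with h | h
      · exact hPlt y hy0 h
      · subst h
        rcases eq_or_lt_of_le hy0 with h0 | h0
        · rw [← h0]
        · -- y = m > 0 : approach from below
          obtain ⟨r, hrdef⟩ : ∃ x, max ((((y - K) / (1 - K * y)) + y) / 2) (y / 2) = x := ⟨_, rfl⟩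
          have hKy : 0 < 1 - K * y := by nlinarith
          have hr₀y : (y - K) / (1 - K * y) < y := by
            rw [div_lt_iff₀ hKy]
            nlinarith [mul_pos (mul_pos hK0 (sub_pos.2 hm1)) (show (0:ℝ) < 1 + y by linarith)]
          have hry : r < y := by
            rw [← hrdef]
            apply max_lt (by linarith) (by linarith)
          have hr0 : 0 ≤ r := by
            rw [← hrdef]
            exact le_trans (by linarith) (le_max_right _ _)
          have hr1 : r < 1 := lt_trans hry hm1
          have hGr : y ≤ (r + K) / (1 + K * r) := by
            rw [le_div_iff₀ (hKm r hr0 hr1)]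
            have hrgt : (y - K) / (1 - K * y) < r := by
              rw [← hrdef]
              apply lt_of_lt_of_le _ (le_max_left _ _)
              linarith
            rw [div_lt_iff₀ hKy] at hrgt
            nlinarith
          calc c (pt a ((y : ℝ) : ℂ)) = c (pt a ((r : ℝ) : ℂ)) :=
                stepG r hr0 hr1 y (le_of_lt hry) hGr
          _ = c (pt a ((0 : ℝ) : ℂ)) := hPlt r hr0 hry
    have hmeqX : m = X := by
      by_contra hne
      have hmltX : m < X := lt_of_le_of_ne hmX hne
      obtain ⟨x, hxdef⟩ : ∃ u, min ((m + K) / (1 + K * m)) X = u := ⟨_, rfl⟩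
      have hxm : m < x := by
        rw [← hxdef]
        apply lt_min _ hmltX
        rw [lt_div_iff₀ (hKm m hm0 hm1)]
        nlinarith [mul_pos (mul_pos hK0 (sub_pos.2 hm1)) (show (0:ℝ) < 1 + m by linarith)]
      have hxSS : x ∈ SS := by
        rw [hSSdef]
        refine ⟨⟨le_trans hm0 (le_of_lt hxm), by rw [← hxdef]; exact min_le_right _ _⟩,
          fun y hy0 hyx => ?_⟩
        rcases le_or_gt y m with h | h
        · exact hPm y hy0 h
        · have hyG : y ≤ (m + K) / (1 + K * m) := by
            apply le_trans hyx
            rw [← hxdef]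
            exact min_le_left _ _
          calc c (pt a ((y : ℝ) : ℂ)) = c (pt a ((m : ℝ) : ℂ)) :=
                stepG m hm0 hm1 y (le_of_lt h) hyG
          _ = c (pt a ((0 : ℝ) : ℂ)) := hPm m hm0 (le_refl m)
      have : x ≤ m := by rw [← hmdef]; exact le_csSup hbdd hxSS
      linarith
    exact hPm X hX0 (le_of_eq hmeqX.symm)
  -- finale
  intro z w
  have hza : Complex.abs (phi (a : ℂ) (z : ℂ)) < 1 := abs_phi_lt_one a.2 z.2
  have hwa : Complex.abs (phi (a : ℂ) (w : ℂ)) < 1 := abs_phi_lt_one a.2 w.2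
  have hz0 : 0 ≤ Complex.abs (phi (a : ℂ) (z : ℂ)) := Complex.abs.nonneg _
  have hw0 : 0 ≤ Complex.abs (phi (a : ℂ) (w : ℂ)) := Complex.abs.nonneg _
  have hptz : c z = c (pt a ((Complex.abs (phi (a : ℂ) (z : ℂ)) : ℝ) : ℂ)) := by
    apply CA
    rw [phi_pt a (by rw [Complex.abs_ofReal, _root_.abs_of_nonneg hz0]; exact hza),
      Complex.abs_ofReal, _root_.abs_of_nonneg hz0]
  have hptw : c w = c (pt a ((Complex.abs (phi (a : ℂ) (w : ℂ)) : ℝ) : ℂ)) := by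
    apply CA
    rw [phi_pt a (by rw [Complex.abs_ofReal, _root_.abs_of_nonneg hw0]; exact hwa),
      Complex.abs_ofReal, _root_.abs_of_nonneg hw0]
  rw [hptz, hptw, const01 _ hz0 hza, const01 _ hw0 hwa]
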